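/- arXiv:2408.00920 — 2 statements merged into one kernel-verified Lean document; each statement's English description precedes it below -/
import Mathlib

section
/- (Proposition 3.3) Let (Ω, P) be a probability space, d ≥ 1, H > 0, and let A be a symmetric d×d real matrix satisfying vᵀAv ≥ m‖v‖² for all v ∈ ℝᵈ for some m > 0, and whose operator norm satisfies ‖A‖ ≤ H (so A is invertible). Let (X_t)_{t≥1} be an independent sequence of measurable random d×d matrices with each X_t almost surely bounded in operator norm by H and with entrywise expectation E[X_t] = A. Define the random matrices T_0 := I (constant) and T_t(ω) := I + (I − X_t(ω)/H)·T_{t−1}(ω) for t ≥ 1. Then the entrywise expectations satisfy E[T_s]/H → A⁻¹ as s → ∞ (in any matrix norm). -/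
open MeasureTheory ProbabilityTheory Filter
open scoped Matrix RealInnerProductSpace

/-- Matrices inherit the product measurable structure from functions. -/
instance matrixMeasurableSpace {m n α : Type*} [MeasurableSpace α] :
    MeasurableSpace (Matrix m n α) :=
  (inferInstance : MeasurableSpace (m → n → α))

section auxLissa
variable {d : ℕ}

lemma entry_abs_le_opNorm' (M : Matrix (Fin d) (Fin d) ℝ) (i j : Fin d) :
    |M i j| ≤ ‖Matrix.toEuclideanCLM (𝕜 := ℝ) M‖ := by
  classical
  set φ := Matrix.toEuclideanCLM (𝕜 := ℝ) M with hφ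
  set x : EuclideanSpace ℝ (Fin d) := EuclideanSpace.single j (1:ℝ)
  have h2 : (φ x) i = M i j := by
    show M.mulVec (Pi.single j 1) i = M i j
    simp [Matrix.mulVec_single]
  have h3 : |(φ x) i| ≤ ‖φ x‖ := by
    have := EuclideanSpace.inner_single_left (𝕜 := ℝ) i 1 (φ x)
    simp only [map_one, one_mul] at this
    calc |(φ x) i| = |⟪EuclideanSpace.single i (1:ℝ), φ x⟫| := by rw [this]
      _ ≤ ‖EuclideanSpace.single i (1:ℝ)‖ * ‖φ x‖ := abs_real_inner_le_norm _ _
      _ = ‖φ x‖ := by rw [show ‖EuclideanSpace.single i (1:ℝ)‖ = 1 by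
            simp [EuclideanSpace.norm_single], one_mul]
  calc |M i j| = |(φ x) i| := by rw [h2]
    _ ≤ ‖φ x‖ := h3
    _ ≤ ‖φ‖ * ‖x‖ := φ.le_opNorm x
    _ = ‖φ‖ := by rw [show ‖x‖ = 1 by simp [x, EuclideanSpace.norm_single], mul_one]

lemma dot_mulVec_symm {B : Matrix (Fin d) (Fin d) ℝ} (hB : B.IsSymm) (v w : Fin d → ℝ) :
    v ⬝ᵥ B.mulVec w = w ⬝ᵥ B.mulVec v := by
  rw [Matrix.dotProduct_mulVec, ← Matrix.mulVec_transpose, hB.eq, dotProduct_comm]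

lemma dot_self_nonneg' (v : Fin d → ℝ) : 0 ≤ v ⬝ᵥ v :=
  Finset.sum_nonneg fun _ _ => mul_self_nonneg _

lemma psd_cauchy_schwarz {B : Matrix (Fin d) (Fin d) ℝ} (hB : B.IsSymm)
    (h0 : ∀ v, 0 ≤ v ⬝ᵥ B.mulVec v) (v w : Fin d → ℝ) :
    (v ⬝ᵥ B.mulVec w) ^ 2 ≤ (v ⬝ᵥ B.mulVec v) * (w ⬝ᵥ B.mulVec w) := by
  have key : ∀ t : ℝ, 0 ≤ (w ⬝ᵥ B.mulVec w) * (t * t) + (2 * (v ⬝ᵥ B.mulVec w)) * t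
      + (v ⬝ᵥ B.mulVec v) := by
    intro t
    have h := h0 (v + t • w)
    have expand : (v + t • w) ⬝ᵥ B.mulVec (v + t • w)
        = (w ⬝ᵥ B.mulVec w) * (t * t) + (2 * (v ⬝ᵥ B.mulVec w)) * t + (v ⬝ᵥ B.mulVec v) := by
      rw [Matrix.mulVec_add, Matrix.mulVec_smul]
      rw [add_dotProduct, smul_dotProduct]
      rw [dotProduct_add, dotProduct_add]
      rw [dotProduct_smul, dotProduct_smul]
      rw [dot_mulVec_symm hB w v]
      simp [smul_eq_mul]
      ring
    rw [expand] at h; linarith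
  have hd := discrim_le_zero key
  unfold discrim at hd
  nlinarith [hd]

lemma opNorm_le_of_quadratic {B : Matrix (Fin d) (Fin d) ℝ} (hB : B.IsSymm) {c : ℝ} (hc : 0 ≤ c)
    (h0 : ∀ v, 0 ≤ v ⬝ᵥ B.mulVec v) (hle : ∀ v, v ⬝ᵥ B.mulVec v ≤ c * (v ⬝ᵥ v)) :
    ‖Matrix.toEuclideanCLM (𝕜 := ℝ) B‖ ≤ c := by
  set φ := Matrix.toEuclideanCLM (𝕜 := ℝ) B with hφ
  refine ContinuousLinearMap.opNorm_le_bound φ hc ?_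
  intro x
  set v : Fin d → ℝ := fun i => x i with hv
  have happ : φ x = (B.mulVec v : Fin d → ℝ) := rfl
  set w : Fin d → ℝ := B.mulVec v with hw
  have hs : (w ⬝ᵥ w) ≤ c ^ 2 * (v ⬝ᵥ v) := by
    have hcs := psd_cauchy_schwarz hB h0 w v
    have h1 : w ⬝ᵥ B.mulVec v = w ⬝ᵥ w := by rw [hw]
    have h2 := hle w
    have h3 := hle v
    have h4 := dot_self_nonneg' w
    have h5 := dot_self_nonneg' v
    have hA := mul_le_mul h2 h3 (h0 v) (mul_nonneg hc h4)
    rcases eq_or_lt_of_le h4 with h | h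
    · nlinarith
    · nlinarith
  have hxnorm : ‖x‖ ^ 2 = v ⬝ᵥ v := by
    rw [EuclideanSpace.norm_sq_eq]
    simp [dotProduct, hv, sq]
  have hphixnorm : ‖φ x‖ ^ 2 = w ⬝ᵥ w := by
    rw [EuclideanSpace.norm_sq_eq, ← happ]
    simp [dotProduct, sq]
  have : ‖φ x‖ ^ 2 ≤ (c * ‖x‖) ^ 2 := by
    rw [hphixnorm]
    calc w ⬝ᵥ w ≤ c ^ 2 * (v ⬝ᵥ v) := hs
      _ = (c * ‖x‖) ^ 2 := by rw [mul_pow, hxnorm]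
  exact (pow_le_pow_iff_left₀ (norm_nonneg _) (by positivity) two_ne_zero).mp this

noncomputable def lissaIter (d : ℕ) (H : ℝ) (f : ℕ → Matrix (Fin d) (Fin d) ℝ) :
    ℕ → Matrix (Fin d) (Fin d) ℝ
  | 0 => 1
  | (t + 1) => 1 + (1 - H⁻¹ • f t) * lissaIter d H f t

lemma lissaIter_congr {H : ℝ} {f g : ℕ → Matrix (Fin d) (Fin d) ℝ} :
    ∀ t, (∀ s < t, f s = g s) → lissaIter d H f t = lissaIter d H g t
  | 0, _ => rfl
  | (t + 1), h => by
    rw [lissaIter, lissaIter, h t (Nat.lt_succ_self t),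
      lissaIter_congr t fun s hs => h s (hs.trans (Nat.lt_succ_self t))]

lemma measurable_matrix_of_entries {α : Type*} [MeasurableSpace α]
    {f : α → Matrix (Fin d) (Fin d) ℝ} (h : ∀ i j, Measurable fun a => f a i j) :
    Measurable f :=
  measurable_pi_lambda _ fun i => measurable_pi_lambda _ fun j => h i j

lemma measurable_entry_comp {α : Type*} [MeasurableSpace α]
    {f : α → Matrix (Fin d) (Fin d) ℝ} (hf : Measurable f) (i j : Fin d) :
    Measurable fun a => f a i j :=
  (measurable_pi_apply j).comp ((measurable_pi_apply i).comp hf)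

lemma measurable_lissaStep {α : Type*} [MeasurableSpace α] (H : ℝ)
    {f g : α → Matrix (Fin d) (Fin d) ℝ} (hf : Measurable f) (hg : Measurable g) :
    Measurable fun a => 1 + (1 - H⁻¹ • f a) * g a := by
  refine measurable_matrix_of_entries fun i j => ?_
  have : (fun a => (1 + (1 - H⁻¹ • f a) * g a) i j)
      = fun a => (1 : Matrix (Fin d) (Fin d) ℝ) i j
        + ∑ k, ((1 : Matrix (Fin d) (Fin d) ℝ) i k - H⁻¹ * f a i k) * g a k j := by
    funext a
    simp [Matrix.add_apply, Matrix.mul_apply, Matrix.sub_apply, Matrix.smul_apply,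
      smul_eq_mul]
  rw [this]
  exact measurable_const.add <| Finset.measurable_sum _ fun k _ =>
    ((measurable_const.sub ((measurable_entry_comp hf i k).const_mul _)).mul
      (measurable_entry_comp hg k j))

lemma measurable_lissaIter (H : ℝ) :
    ∀ t, Measurable fun f : ℕ → Matrix (Fin d) (Fin d) ℝ => lissaIter d H f t
  | 0 => measurable_const
  | (t + 1) => by
    have h1 : Measurable fun f : ℕ → Matrix (Fin d) (Fin d) ℝ => f t := measurable_pi_apply t
    simpa [lissaIter] using measurable_lissaStep H h1 (measurable_lissaIter H t)

end auxLissa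

set_option maxHeartbeats 2000000

/-- (Proposition 3.3) Let `A` be a symmetric positive-definite `d × d` real matrix with
`vᵀAv ≥ m‖v‖²` (`m > 0`) and ℓ²-operator norm at most `H`.  Let `(X t)` be an independent
sequence of measurable random matrices, almost surely bounded by `H` in operator norm,
with entrywise mean `A`.  Then the LiSSA recursion `T 0 = 1`,
`T (t+1) = I + (I − X t / H) * T t` satisfies `E[T s] / H → A⁻¹` as `s → ∞`.
(Here `X t` plays the role of the paper's `X_{t+1}`.) -/
theorem lissa_inverse_hessian_asymptotically_unbiased
    {Ω : Type*} [MeasurableSpace Ω] (P : Measure Ω) [IsProbabilityMeasure P]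
    (d : ℕ) (hd : 1 ≤ d) (Hbd m : ℝ) (hH : 0 < Hbd) (hm : 0 < m)
    (A : Matrix (Fin d) (Fin d) ℝ)
    (hsymm : A.IsSymm)
    (hpos : ∀ v : Fin d → ℝ, m * (v ⬝ᵥ v) ≤ v ⬝ᵥ A.mulVec v)
    (hAnorm : ‖Matrix.toEuclideanCLM (𝕜 := ℝ) A‖ ≤ Hbd)
    (X : ℕ → Ω → Matrix (Fin d) (Fin d) ℝ)
    (hmeas : ∀ t, Measurable (X t))
    (hindep : iIndepFun X P)
    (hbdd : ∀ t, ∀ᵐ ω ∂P, ‖Matrix.toEuclideanCLM (𝕜 := ℝ) (X t ω)‖ ≤ Hbd)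
    (hmean : ∀ t i j, ∫ ω, X t ω i j ∂P = A i j)
    (T : ℕ → Ω → Matrix (Fin d) (Fin d) ℝ)
    (hT0 : ∀ ω, T 0 ω = 1)
    (hTrec : ∀ t ω, T (t + 1) ω = 1 + (1 - Hbd⁻¹ • X t ω) * T t ω) :
    Tendsto (fun s => Hbd⁻¹ • Matrix.of fun i j => ∫ ω, T s ω i j ∂P)
      atTop (nhds A⁻¹) := by
  classical
  set B : Matrix (Fin d) (Fin d) ℝ := 1 - Hbd⁻¹ • A with hBdef
  set M : ℕ → Matrix (Fin d) (Fin d) ℝ :=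
    fun t => Matrix.of fun i j => ∫ ω, T t ω i j ∂P with hMdef
  -- T as a function of the X's
  have hTiter : ∀ t ω, T t ω = lissaIter d Hbd (fun s => X s ω) t := by
    intro t
    induction t with
    | zero => intro ω; rw [hT0]; rfl
    | succ t ih => intro ω; rw [hTrec, ih]; rfl
  -- measurability
  have hTmeas : ∀ t, Measurable (T t) := by
    intro t
    have : T t = (fun f => lissaIter d Hbd f t) ∘ (fun ω s => X s ω) :=
      funext fun ω => hTiter t ω
    rw [this]
    exact (measurable_lissaIter _ _).comp (measurable_pi_lambda _ fun s => hmeas s)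
  -- independence of X t and T t
  have hindepT : ∀ t, IndepFun (X t) (T t) P := by
    intro t
    have hdisj : Disjoint ({t} : Finset ℕ) (Finset.range t) := by
      simp [Finset.disjoint_left]
    have h := hindep.indepFun_finset {t} (Finset.range t) hdisj hmeas
    have ht : t ∈ ({t} : Finset ℕ) := Finset.mem_singleton_self t
    have hg1 : Measurable fun v : {x // x ∈ ({t} : Finset ℕ)} → Matrix (Fin d) (Fin d) ℝ =>
        v ⟨t, ht⟩ := measurable_pi_apply _
    have hg2 : Measurable fun v : {x // x ∈ Finset.range t} → Matrix (Fin d) (Fin d) ℝ =>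
        lissaIter d Hbd (fun s => if hs : s ∈ Finset.range t then v ⟨s, hs⟩ else 1) t := by
      refine (measurable_lissaIter _ _).comp (measurable_pi_lambda _ fun s => ?_)
      by_cases hs : s ∈ Finset.range t
      · simp only [dif_pos hs]
        exact measurable_pi_apply _
      · simp only [dif_neg hs]
        exact measurable_const
    have h2 := h.comp hg1 hg2
    have e2 : (fun v : {x // x ∈ Finset.range t} → Matrix (Fin d) (Fin d) ℝ =>
          lissaIter d Hbd (fun s => if hs : s ∈ Finset.range t then v ⟨s, hs⟩ else 1) t)
        ∘ (fun a (i : {x // x ∈ Finset.range t}) => X i a) = T t := by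
      funext ω
      show lissaIter d Hbd (fun s => if hs : s ∈ Finset.range t then X s ω else 1) t = T t ω
      rw [hTiter]
      exact lissaIter_congr t fun s hs => by simp [Finset.mem_range.mpr hs]
    rw [e2] at h2
    exact h2
  -- entrywise bounds
  have hXentry : ∀ t, ∀ᵐ ω ∂P, ∀ i j, |X t ω i j| ≤ Hbd := by
    intro t
    filter_upwards [hbdd t] with ω hω i j
    exact (entry_abs_le_opNorm' _ i j).trans hω
  set c : ℕ → ℝ := fun t => (2 * (d : ℝ) + 1) ^ (t + 1) with hcdef
  have hc_pos : ∀ t, (0:ℝ) < c t := fun t => by positivity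
  have hone_entry : ∀ i j : Fin d, |(1 : Matrix (Fin d) (Fin d) ℝ) i j| ≤ 1 := by
    intro i j
    by_cases h : i = j <;> simp [Matrix.one_apply, h]
  have hTbound : ∀ t, ∀ᵐ ω ∂P, ∀ i j, |T t ω i j| ≤ c t := by
    intro t
    induction t with
    | zero =>
      refine Filter.Eventually.of_forall fun ω i j => ?_
      rw [hT0]
      refine (hone_entry i j).trans ?_
      have h1 : (1:ℝ) ≤ 2 * (d:ℝ) + 1 := by
        have := Nat.cast_nonneg (α := ℝ) d; linarith
      calc (1:ℝ) ≤ 2 * (d:ℝ) + 1 := h1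
        _ = c 0 := (pow_one _).symm
    | succ t ih =>
      filter_upwards [ih, hXentry t] with ω hω hX i j
      rw [hTrec]
      have hentry : (1 + (1 - Hbd⁻¹ • X t ω) * T t ω) i j
          = (1 : Matrix (Fin d) (Fin d) ℝ) i j
            + ∑ k, ((1 : Matrix (Fin d) (Fin d) ℝ) i k - Hbd⁻¹ * X t ω i k) * T t ω k j := by
        simp [Matrix.add_apply, Matrix.mul_apply, Matrix.sub_apply, Matrix.smul_apply,
          smul_eq_mul]
      rw [hentry]
      have hterm : ∀ k : Fin d,
          |((1 : Matrix (Fin d) (Fin d) ℝ) i k - Hbd⁻¹ * X t ω i k) * T t ω k j|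
            ≤ 2 * c t := by
        intro k
        rw [abs_mul]
        have h1 : |(1 : Matrix (Fin d) (Fin d) ℝ) i k - Hbd⁻¹ * X t ω i k| ≤ 2 := by
          refine (abs_sub _ _).trans ?_
          have h2 : |Hbd⁻¹ * X t ω i k| ≤ 1 := by
            rw [abs_mul, abs_of_nonneg (inv_nonneg.mpr hH.le)]
            calc Hbd⁻¹ * |X t ω i k| ≤ Hbd⁻¹ * Hbd :=
              mul_le_mul_of_nonneg_left (hX i k) (inv_nonneg.mpr hH.le)
            _ = 1 := inv_mul_cancel₀ (ne_of_gt hH)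
          linarith [hone_entry i k]
        exact mul_le_mul h1 (hω k j) (abs_nonneg _) (by norm_num)
      calc |(1 : Matrix (Fin d) (Fin d) ℝ) i j
            + ∑ k, ((1 : Matrix (Fin d) (Fin d) ℝ) i k - Hbd⁻¹ * X t ω i k) * T t ω k j|
          ≤ |(1 : Matrix (Fin d) (Fin d) ℝ) i j|
            + |∑ k, ((1 : Matrix (Fin d) (Fin d) ℝ) i k - Hbd⁻¹ * X t ω i k) * T t ω k j| :=
            abs_add_le _ _
        _ ≤ 1 + ∑ k : Fin d, (2 * c t) := by
            refine add_le_add (hone_entry i j) ?_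
            exact (Finset.abs_sum_le_sum_abs _ _).trans
              (Finset.sum_le_sum fun k _ => hterm k)
        _ = 1 + (d : ℝ) * (2 * c t) := by
            rw [Finset.sum_const, Finset.card_fin, nsmul_eq_mul]
        _ ≤ c t + (d : ℝ) * (2 * c t) := by
            have h1 : (1:ℝ) ≤ c t := by
              have h2 : (1:ℝ) ≤ 2 * (d:ℝ) + 1 := by
                have := Nat.cast_nonneg (α := ℝ) d; linarith
              exact one_le_pow₀ h2
            linarith
        _ = c (t + 1) := by
            simp only [hcdef]
            ring
  -- integrability
  have hTint : ∀ t (i j : Fin d), Integrable (fun ω => T t ω i j) P := by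
    intro t i j
    refine ⟨(measurable_entry_comp (hTmeas t) i j).aestronglyMeasurable, ?_⟩
    refine HasFiniteIntegral.of_bounded (C := c t) ?_
    filter_upwards [hTbound t] with ω hω
    simpa [Real.norm_eq_abs] using hω i j
  have hXint : ∀ t (i j : Fin d), Integrable (fun ω => X t ω i j) P := by
    intro t i j
    refine ⟨(measurable_entry_comp (hmeas t) i j).aestronglyMeasurable, ?_⟩
    refine HasFiniteIntegral.of_bounded (C := Hbd) ?_
    filter_upwards [hXentry t] with ω hω
    simpa [Real.norm_eq_abs] using hω i j
  have hXTint : ∀ t (i k j : Fin d),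
      Integrable (fun ω => X t ω i k * T t ω k j) P := by
    intro t i k j
    refine ⟨((measurable_entry_comp (hmeas t) i k).mul
      (measurable_entry_comp (hTmeas t) k j)).aestronglyMeasurable, ?_⟩
    refine HasFiniteIntegral.of_bounded (C := Hbd * c t) ?_
    filter_upwards [hXentry t, hTbound t] with ω h1 h2
    rw [Real.norm_eq_abs, abs_mul]
    exact mul_le_mul (h1 i k) (h2 k j) (abs_nonneg _) hH.le
  -- expectation recursion
  have hM0 : M 0 = 1 := by
    ext i j
    show (∫ ω, T 0 ω i j ∂P) = (1 : Matrix (Fin d) (Fin d) ℝ) i j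
    simp [hT0]
  have hMrec : ∀ t, M (t + 1) = 1 + B * M t := by
    intro t
    ext i j
    show (∫ ω, T (t + 1) ω i j ∂P) = (1 + B * M t) i j
    have hexp : ∀ ω, T (t + 1) ω i j
        = (1 : Matrix (Fin d) (Fin d) ℝ) i j
          + (∑ k, (1 : Matrix (Fin d) (Fin d) ℝ) i k * T t ω k j
            - Hbd⁻¹ * ∑ k, X t ω i k * T t ω k j) := by
      intro ω
      rw [hTrec]
      simp only [Matrix.add_apply, Matrix.mul_apply, Matrix.sub_apply, Matrix.smul_apply,
        smul_eq_mul, sub_mul, Finset.sum_sub_distrib, Finset.mul_sum]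
      ring_nf
    have hint1 : Integrable (fun ω => ∑ k, (1 : Matrix (Fin d) (Fin d) ℝ) i k * T t ω k j) P :=
      integrable_finset_sum _ fun k _ => (hTint t k j).const_mul _
    have hint2 : Integrable (fun ω => ∑ k, X t ω i k * T t ω k j) P :=
      integrable_finset_sum _ fun k _ => hXTint t i k j
    calc (∫ ω, T (t + 1) ω i j ∂P)
        = ∫ ω, ((1 : Matrix (Fin d) (Fin d) ℝ) i j
          + (∑ k, (1 : Matrix (Fin d) (Fin d) ℝ) i k * T t ω k j
            - Hbd⁻¹ * ∑ k, X t ω i k * T t ω k j)) ∂P := by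
          exact integral_congr_ae (Filter.Eventually.of_forall hexp)
      _ = (1 : Matrix (Fin d) (Fin d) ℝ) i j
          + ((∑ k, (1 : Matrix (Fin d) (Fin d) ℝ) i k * (M t) k j)
            - Hbd⁻¹ * ∑ k, A i k * (M t) k j) := by
          have hint4 : Integrable (fun ω => Hbd⁻¹ * ∑ k, X t ω i k * T t ω k j) P :=
            hint2.const_mul Hbd⁻¹
          have hint3 : Integrable (fun ω => (∑ k, (1 : Matrix (Fin d) (Fin d) ℝ) i k * T t ω k j)
              - Hbd⁻¹ * ∑ k, X t ω i k * T t ω k j) P := hint1.sub hint4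
          rw [integral_add (integrable_const _) hint3, integral_const,
            integral_sub hint1 hint4]
          simp only [measure_univ, probReal_univ, ENNReal.toReal_one, one_smul]
          congr 1
          congr 1
          · rw [integral_finset_sum _ fun k _ => (hTint t k j).const_mul _]
            refine Finset.sum_congr rfl fun k _ => ?_
            rw [integral_const_mul]
            rfl
          · rw [integral_const_mul, integral_finset_sum _ fun k _ => hXTint t i k j]
            congr 1
            refine Finset.sum_congr rfl fun k _ => ?_
            have hind : IndepFun (fun ω => X t ω i k) (fun ω => T t ω k j) P := by
              have := (hindepT t).comp
                (measurable_entry_comp (measurable_id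
                  (α := Matrix (Fin d) (Fin d) ℝ)) i k)
                (measurable_entry_comp (measurable_id
                  (α := Matrix (Fin d) (Fin d) ℝ)) k j)
              exact this
            have hmul : ∫ a, X t a i k * T t a k j ∂P
                = (∫ ω, X t ω i k ∂P) * ∫ ω, T t ω k j ∂P :=
              hind.integral_mul_eq_mul_integral (hXint t i k).1 (hTint t k j).1
            rw [hmul, hmean]
            rfl
      _ = (1 + B * M t) i j := by
          simp only [Matrix.add_apply, Matrix.mul_apply, hBdef, Matrix.sub_apply,
            Matrix.smul_apply, smul_eq_mul, sub_mul, Finset.sum_sub_distrib, Finset.mul_sum]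
          ring_nf
  -- geometric sum formula
  have hMgeom : ∀ t, M t = ∑ k ∈ Finset.range (t + 1), B ^ k := by
    intro t
    induction t with
    | zero => rw [hM0, Finset.range_one, Finset.sum_singleton, pow_zero]
    | succ t ih =>
      rw [hMrec, ih]
      exact ((geom_sum_succ (x := B) (n := t + 1)).trans (add_comm _ _)).symm
  -- norm bound on B
  set φ := Matrix.toEuclideanCLM (𝕜 := ℝ) (n := Fin d) with hφdef
  have hBsymm : B.IsSymm := by
    unfold Matrix.IsSymm
    rw [hBdef, Matrix.transpose_sub, Matrix.transpose_one, Matrix.transpose_smul, hsymm.eq]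
  have hquad : ∀ v : Fin d → ℝ, v ⬝ᵥ B.mulVec v = v ⬝ᵥ v - Hbd⁻¹ * (v ⬝ᵥ A.mulVec v) := by
    intro v
    rw [hBdef, Matrix.sub_mulVec, Matrix.one_mulVec, Matrix.smul_mulVec,
      dotProduct_sub, dotProduct_smul, smul_eq_mul]
  have hAub : ∀ v : Fin d → ℝ, v ⬝ᵥ A.mulVec v ≤ Hbd * (v ⬝ᵥ v) := by
    intro v
    let x : EuclideanSpace ℝ (Fin d) := (WithLp.equiv 2 (Fin d → ℝ)).symm v
    have happ : φ A x = (A.mulVec v : Fin d → ℝ) := rfl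
    have hdot : v ⬝ᵥ A.mulVec v = ⟪x, φ A x⟫ := by
      rw [← happ]
      simp [PiLp.inner_apply, dotProduct, mul_comm, x]
    have hxnorm : ‖x‖ ^ 2 = v ⬝ᵥ v := by
      rw [EuclideanSpace.norm_sq_eq]
      simp [dotProduct, sq, x]
    calc v ⬝ᵥ A.mulVec v = ⟪x, φ A x⟫ := hdot
      _ ≤ ‖x‖ * ‖φ A x‖ := real_inner_le_norm _ _
      _ ≤ ‖x‖ * (‖φ A‖ * ‖x‖) :=
          mul_le_mul_of_nonneg_left ((φ A).le_opNorm x) (norm_nonneg _)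
      _ ≤ ‖x‖ * (Hbd * ‖x‖) := by
          have := mul_le_mul_of_nonneg_right hAnorm (norm_nonneg x)
          exact mul_le_mul_of_nonneg_left this (norm_nonneg _)
      _ = Hbd * (v ⬝ᵥ v) := by rw [← hxnorm]; ring
  have hmH : m ≤ Hbd := by
    have hz : (0 : ℕ) < d := hd
    set v : Fin d → ℝ := Pi.single (⟨0, hz⟩ : Fin d) 1 with hvdef
    have hvv : v ⬝ᵥ v = 1 := by
      simp [hvdef, dotProduct_single]
    have h1 := hpos v
    have h2 := hAub v
    rw [hvv] at h1 h2
    linarith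
  have h0 : ∀ v : Fin d → ℝ, 0 ≤ v ⬝ᵥ B.mulVec v := by
    intro v
    rw [hquad]
    have h1 := hAub v
    have h2 : Hbd⁻¹ * (v ⬝ᵥ A.mulVec v) ≤ Hbd⁻¹ * (Hbd * (v ⬝ᵥ v)) :=
      mul_le_mul_of_nonneg_left h1 (inv_nonneg.mpr hH.le)
    rw [← mul_assoc, inv_mul_cancel₀ (ne_of_gt hH), one_mul] at h2
    linarith
  have hub : ∀ v : Fin d → ℝ, v ⬝ᵥ B.mulVec v ≤ (1 - m / Hbd) * (v ⬝ᵥ v) := by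
    intro v
    rw [hquad]
    have h1 := hpos v
    have h2 : Hbd⁻¹ * (m * (v ⬝ᵥ v)) ≤ Hbd⁻¹ * (v ⬝ᵥ A.mulVec v) :=
      mul_le_mul_of_nonneg_left h1 (inv_nonneg.mpr hH.le)
    have : (1 - m / Hbd) * (v ⬝ᵥ v) = v ⬝ᵥ v - Hbd⁻¹ * (m * (v ⬝ᵥ v)) := by
      field_simp
    rw [this]
    linarith
  have hc0 : (0:ℝ) ≤ 1 - m / Hbd := by
    have : m / Hbd ≤ 1 := (div_le_one hH).mpr hmH
    linarith
  have hnormB : ‖φ B‖ ≤ 1 - m / Hbd := opNorm_le_of_quadratic hBsymm hc0 h0 hub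
  have hlt : ‖φ B‖ < 1 := by
    have : m / Hbd > 0 := div_pos hm hH
    linarith
  -- geometric series convergence in the CLM algebra
  have hsummable : Summable fun n => (φ B) ^ n := summable_geometric_of_norm_lt_one hlt
  have hhs : HasSum (fun n => (φ B) ^ n) (Ring.inverse (1 - φ B)) :=
    hasSum_geom_series_inverse (φ B) hlt
  have htend1 : Tendsto (fun n => ∑ i ∈ Finset.range n, (φ B) ^ i) atTop
      (nhds (Ring.inverse (1 - φ B))) := hhs.tendsto_sum_nat
  -- pull back to matrices
  have hφsum : ∀ s, φ (M s) = ∑ i ∈ Finset.range (s + 1), (φ B) ^ i := by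
    intro s
    rw [hMgeom s, map_sum]
    exact Finset.sum_congr rfl fun i _ => map_pow φ B i
  set C : Matrix (Fin d) (Fin d) ℝ := φ.symm (Ring.inverse (1 - φ B)) with hCdef
  have hMs : ∀ s, M s = φ.symm (∑ i ∈ Finset.range (s + 1), (φ B) ^ i) := by
    intro s
    rw [← hφsum s, StarAlgEquiv.symm_apply_apply]
  have hcont : Continuous (φ.symm :
      (EuclideanSpace ℝ (Fin d) →L[ℝ] EuclideanSpace ℝ (Fin d)) → Matrix (Fin d) (Fin d) ℝ) := by
    let L : (EuclideanSpace ℝ (Fin d) →L[ℝ] EuclideanSpace ℝ (Fin d)) →ₗ[ℝ]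
        Matrix (Fin d) (Fin d) ℝ :=
      { toFun := φ.symm
        map_add' := fun a b => map_add φ.symm a b
        map_smul' := fun r a => map_smul φ.symm r a }
    exact L.continuous_of_finiteDimensional
  have htend2 : Tendsto M atTop (nhds C) := by
    have h1 : Tendsto (fun s => ∑ i ∈ Finset.range (s + 1), (φ B) ^ i) atTop
        (nhds (Ring.inverse (1 - φ B))) :=
      htend1.comp (tendsto_add_atTop_nat 1)
    have h2 := (hcont.tendsto _).comp h1
    rw [show M = (⇑φ.symm ∘ fun s => ∑ i ∈ Finset.range (s + 1), (φ B) ^ i) from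
      funext fun s => hMs s]
    exact h2
  -- identify the limit
  have hunit : IsUnit (1 - φ B) := isUnit_one_sub_of_norm_lt_one hlt
  have hAC : A * (Hbd⁻¹ • C) = 1 := by
    have h1 : (1 : Matrix (Fin d) (Fin d) ℝ) - B = Hbd⁻¹ • A := by
      rw [hBdef, sub_sub_cancel]
    have h2 : φ ((Hbd⁻¹ • A) * C) = 1 := by
      rw [map_mul, ← h1, map_sub, map_one, hCdef, StarAlgEquiv.apply_symm_apply]
      exact Ring.mul_inverse_cancel _ hunit
    have h3 : (Hbd⁻¹ • A) * C = 1 := by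
      have h4 := congrArg φ.symm h2
      rwa [StarAlgEquiv.symm_apply_apply, map_one] at h4
    calc A * (Hbd⁻¹ • C) = (Hbd⁻¹ • A) * C := by
          rw [mul_smul_comm, smul_mul_assoc]
      _ = 1 := h3
  have hAinv : A⁻¹ = Hbd⁻¹ • C := Matrix.inv_eq_right_inv hAC
  rw [hAinv]
  refine Filter.Tendsto.congr (fun s => ?_) (htend2.const_smul Hbd⁻¹)
  rw [hMdef]
end

section
/- (Theorem 2 / Gaussian mechanism) Fix d ≥ 1 and let E = EuclideanSpace ℝ (Fin d). For a mean m ∈ E and σ > 0, let μ_m denote the Gaussian measure on E with mean m and covariance σ²·I, i.e. the pushforward under the canonical measurable equivalence (Fin d → ℝ) ≃ E of the product measure ⨂_{i} gaussianReal (m i) σ². Let w̃, w̃* ∈ E with ‖w̃ − w̃*‖ ≤ Δ for some Δ > 0, let 0 < ε < 1 and 0 < δ < 1, and suppose σ ≥ (Δ/ε)·√(2·ln(1.25/δ)). Then for every measurable set T ⊆ E, both μ_{w̃}(T) ≤ exp(ε)·μ_{w̃*}(T) + δ and μ_{w̃*}(T) ≤ exp(ε)·μ_{w̃}(T) + δ.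 -/
set_option maxHeartbeats 1000000

open MeasureTheory ProbabilityTheory Real Filter
open scoped NNReal ENNReal

section AuxiliaryLemmas

lemma gpdf_mul (m₁ m₂ : ℝ) (v₁ v₂ : ℝ≥0) (h₁ : 0 < (v₁:ℝ)) (h₂ : 0 < (v₂:ℝ)) (z x : ℝ) :
    gaussianPDFReal m₁ v₁ x * gaussianPDFReal m₂ v₂ (z - x) =
      gaussianPDFReal (m₁ + m₂) (v₁ + v₂) z * (√(π / (((v₁:ℝ) + v₂) / (2 * v₁ * v₂))))⁻¹ *
        Real.exp (-((((v₁:ℝ) + v₂) / (2 * v₁ * v₂))) *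
          (x - (((v₂:ℝ) * m₁ + v₁ * (z - m₂)) / (v₁ + v₂)))^2) := by
  have hs : 0 < (v₁:ℝ) + v₂ := by positivity
  have ha : 0 < ((v₁:ℝ) + v₂) / (2 * v₁ * v₂) := by positivity
  unfold gaussianPDFReal
  rw [NNReal.coe_add]
  have hconst : √(2 * π * v₁) * √(2 * π * v₂)
      = √(2 * π * ((v₁:ℝ) + v₂)) * √(π / (((v₁:ℝ) + v₂) / (2 * v₁ * v₂))) := by
    rw [← Real.sqrt_mul (by positivity), ← Real.sqrt_mul (by positivity)]
    congr 1
    field_simp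
  have hexp : -(x - m₁)^2 / (2*(v₁:ℝ)) + -((z - x) - m₂)^2 / (2*(v₂:ℝ))
      = -(z - (m₁+m₂))^2 / (2*((v₁:ℝ)+v₂))
        + (-((((v₁:ℝ) + v₂) / (2 * v₁ * v₂))) *
          (x - (((v₂:ℝ) * m₁ + v₁ * (z - m₂)) / (v₁ + v₂)))^2) := by
    field_simp
    ring
  calc (√(2 * π * v₁))⁻¹ * rexp (-(x - m₁) ^ 2 / (2 * v₁)) *
        ((√(2 * π * v₂))⁻¹ * rexp (-(z - x - m₂) ^ 2 / (2 * v₂)))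
      = (√(2 * π * v₁) * √(2 * π * v₂))⁻¹ *
          rexp (-(x - m₁)^2 / (2*(v₁:ℝ)) + -((z - x) - m₂)^2 / (2*(v₂:ℝ))) := by
        rw [mul_inv, Real.exp_add]; ring
    _ = (√(2 * π * ((v₁:ℝ) + v₂)) * √(π / (((v₁:ℝ) + v₂) / (2 * v₁ * v₂))))⁻¹ *
          rexp (-(z - (m₁+m₂))^2 / (2*((v₁:ℝ)+v₂))
            + (-((((v₁:ℝ) + v₂) / (2 * v₁ * v₂))) *
              (x - (((v₂:ℝ) * m₁ + v₁ * (z - m₂)) / (v₁ + v₂)))^2)) := by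
        rw [hconst, hexp]
    _ = _ := by rw [mul_inv, Real.exp_add]; ring

lemma gpdf_conv_integrable (m₁ m₂ : ℝ) (v₁ v₂ : ℝ≥0) (h₁ : 0 < (v₁:ℝ)) (h₂ : 0 < (v₂:ℝ)) (z : ℝ) :
    Integrable (fun x => gaussianPDFReal m₁ v₁ x * gaussianPDFReal m₂ v₂ (z - x)) := by
  have ha : 0 < ((v₁:ℝ) + v₂) / (2 * v₁ * v₂) := by positivity
  simp_rw [gpdf_mul m₁ m₂ v₁ v₂ h₁ h₂ z]
  exact (((integrable_exp_neg_mul_sq ha).comp_sub_right _).const_mul _)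

lemma gpdf_conv (m₁ m₂ : ℝ) (v₁ v₂ : ℝ≥0) (h₁ : 0 < (v₁:ℝ)) (h₂ : 0 < (v₂:ℝ)) (z : ℝ) :
    ∫ x, gaussianPDFReal m₁ v₁ x * gaussianPDFReal m₂ v₂ (z - x)
      = gaussianPDFReal (m₁ + m₂) (v₁ + v₂) z := by
  have ha : 0 < ((v₁:ℝ) + v₂) / (2 * v₁ * v₂) := by positivity
  simp_rw [gpdf_mul m₁ m₂ v₁ v₂ h₁ h₂ z]
  rw [integral_const_mul]
  have : (fun x => rexp (-((((v₁:ℝ) + v₂) / (2 * v₁ * v₂))) *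
          (x - (((v₂:ℝ) * m₁ + v₁ * (z - m₂)) / (v₁ + v₂)))^2))
      = fun x => (fun x => rexp (-((((v₁:ℝ) + v₂) / (2 * v₁ * v₂))) * x^2))
        (x + -((((v₂:ℝ) * m₁ + v₁ * (z - m₂)) / (v₁ + v₂)))) := by
    funext x; rw [sub_eq_add_neg]
  rw [this, integral_add_right_eq_self (fun x => rexp (-((((v₁:ℝ) + v₂) / (2 * v₁ * v₂))) * x^2)),
    integral_gaussian]
  have hne : √(π / (((v₁:ℝ) + v₂) / (2 * v₁ * v₂))) ≠ 0 := by positivity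
  field_simp

lemma gaussianReal_conv (m₁ m₂ : ℝ) (v₁ v₂ : ℝ≥0) :
    Measure.map (fun p : ℝ × ℝ => p.1 + p.2)
        ((gaussianReal m₁ v₁).prod (gaussianReal m₂ v₂))
      = gaussianReal (m₁ + m₂) (v₁ + v₂) := by
  by_cases h₁ : v₁ = 0
  · subst h₁
    rw [gaussianReal_zero_var, Measure.dirac_prod,
      Measure.map_map (by fun_prop) (by fun_prop)]
    have : ((fun p : ℝ × ℝ => p.1 + p.2) ∘ Prod.mk m₁) = fun x => m₁ + x := rfl
    rw [this, gaussianReal_map_const_add, zero_add, add_comm m₂ m₁]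
  by_cases h₂ : v₂ = 0
  · subst h₂
    rw [gaussianReal_zero_var, Measure.prod_dirac,
      Measure.map_map (by fun_prop) (by fun_prop)]
    have : ((fun p : ℝ × ℝ => p.1 + p.2) ∘ (fun x => (x, m₂))) = fun x => x + m₂ := rfl
    rw [this, gaussianReal_map_add_const, add_zero]
  -- main case
  have hv₁ : 0 < (v₁:ℝ) := by positivity
  have hv₂ : 0 < (v₂:ℝ) := by positivity
  have hv : v₁ + v₂ ≠ 0 := by
    intro h; exact h₁ (le_antisymm (h ▸ le_self_add) (by positivity))
  have hpos : 0 < ((v₁:ℝ) + v₂) := by positivity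
  ext s hs
  have hmble_ind : Measurable fun z => s.indicator (fun _ => (1 : ℝ≥0∞)) z :=
    measurable_const.indicator hs
  rw [Measure.map_apply (by fun_prop) hs]
  have : ((gaussianReal m₁ v₁).prod (gaussianReal m₂ v₂)) ((fun p : ℝ × ℝ => p.1 + p.2) ⁻¹' s)
      = ∫⁻ p : ℝ × ℝ, s.indicator (fun _ => (1:ℝ≥0∞)) (p.1 + p.2)
          ∂((gaussianReal m₁ v₁).prod (gaussianReal m₂ v₂)) := by
    rw [← lintegral_indicator_one (hs.preimage (by fun_prop))]; rfl
  rw [this, lintegral_prod _ (by fun_prop)]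
  simp only
  rw [gaussianReal_of_var_ne_zero m₁ h₁, gaussianReal_of_var_ne_zero m₂ h₂]
  have inner : ∀ x : ℝ, ∫⁻ y, s.indicator (fun _ => (1:ℝ≥0∞)) (x + y)
      ∂(volume.withDensity (gaussianPDF m₂ v₂))
      = ∫⁻ z, gaussianPDF m₂ v₂ (z - x) * s.indicator (fun _ => (1:ℝ≥0∞)) z := by
    intro x
    rw [lintegral_withDensity_eq_lintegral_mul _ (measurable_gaussianPDF _ _) (by fun_prop)]
    have := lintegral_add_right_eq_self
      (μ := (volume : Measure ℝ))
      (fun z => gaussianPDF m₂ v₂ (z - x) * s.indicator (fun _ => (1:ℝ≥0∞)) z) x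
    rw [← this]
    congr 1 with y
    simp [add_comm x y]
  simp_rw [inner]
  have hFm : Measurable (Function.uncurry fun x z =>
      gaussianPDF m₂ v₂ (z - x) * s.indicator (fun _ => (1:ℝ≥0∞)) z) := by
    apply Measurable.mul
    · exact (measurable_gaussianPDF m₂ v₂).comp (by fun_prop)
    · exact hmble_ind.comp measurable_snd
  rw [lintegral_withDensity_eq_lintegral_mul _ (measurable_gaussianPDF _ _)
    (Measurable.lintegral_prod_right hFm)]
  simp only [Pi.mul_apply]
  have push : ∀ a : ℝ, gaussianPDF m₁ v₁ a *
      ∫⁻ z, gaussianPDF m₂ v₂ (z - a) * s.indicator (fun _ => (1:ℝ≥0∞)) z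
      = ∫⁻ z, gaussianPDF m₁ v₁ a *
        (gaussianPDF m₂ v₂ (z - a) * s.indicator (fun _ => (1:ℝ≥0∞)) z) := by
    intro a
    rw [lintegral_const_mul _ (by
      exact ((measurable_gaussianPDF m₂ v₂).comp (by fun_prop)).mul hmble_ind)]
  simp_rw [push]
  rw [lintegral_lintegral_swap (by
    apply Measurable.aemeasurable
    apply Measurable.mul
    · exact (measurable_gaussianPDF m₁ v₁).comp measurable_fst
    · exact ((measurable_gaussianPDF m₂ v₂).comp (by fun_prop)).mul
        (hmble_ind.comp measurable_snd))]
  have swap_inner : ∀ z : ℝ, ∫⁻ x, gaussianPDF m₁ v₁ x *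
      (gaussianPDF m₂ v₂ (z - x) * s.indicator (fun _ => (1:ℝ≥0∞)) z)
      = gaussianPDF (m₁ + m₂) (v₁ + v₂) z * s.indicator (fun _ => (1:ℝ≥0∞)) z := by
    intro z
    simp_rw [← mul_assoc]
    have hm : Measurable fun x => gaussianPDF m₁ v₁ x * gaussianPDF m₂ v₂ (z - x) :=
      (measurable_gaussianPDF _ _).mul
        ((measurable_gaussianPDF _ _).comp (measurable_const.sub measurable_id))
    rw [lintegral_mul_const _ hm]
    congr 1
    have : ∀ x, gaussianPDF m₁ v₁ x * gaussianPDF m₂ v₂ (z - x)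
        = ENNReal.ofReal (gaussianPDFReal m₁ v₁ x * gaussianPDFReal m₂ v₂ (z - x)) := by
      intro x
      rw [gaussianPDF, gaussianPDF, ← ENNReal.ofReal_mul (gaussianPDFReal_nonneg _ _ _)]
    simp_rw [this]
    rw [← ofReal_integral_eq_lintegral_ofReal (gpdf_conv_integrable m₁ m₂ v₁ v₂ hv₁ hv₂ z)
        (ae_of_all _ fun x => mul_nonneg (gaussianPDFReal_nonneg _ _ _)
          (gaussianPDFReal_nonneg _ _ _)),
      gpdf_conv m₁ m₂ v₁ v₂ hv₁ hv₂ z]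
    rfl
  simp_rw [swap_inner]
  rw [gaussianReal_of_var_ne_zero _ hv, withDensity_apply _ hs,
    ← lintegral_indicator hs]
  congr 1 with z
  by_cases hz : z ∈ s <;> simp [Set.indicator_apply, hz]

lemma map_sum_pi_gauss (v : ℝ≥0) : ∀ (n : ℕ) (a m : Fin n → ℝ) (V : ℝ≥0),
    (V:ℝ) = ∑ i, (a i)^2 →
    Measure.map (fun x : Fin n → ℝ => ∑ i, a i * x i)
        (Measure.pi fun i => gaussianReal (m i) v)
      = gaussianReal (∑ i, a i * m i) (V * v) := by
  intro n
  induction n with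
  | zero =>
    intro a m V hV
    have hV0 : V = 0 := by
      ext; simp at hV ⊢; exact hV
    subst hV0
    simp only [Finset.univ_eq_empty, Finset.sum_empty, zero_mul, gaussianReal_zero_var]
    rw [Measure.map_const, measure_univ, one_smul]
  | succ n ih =>
    intro a m V hV
    -- decompose the product measure
    have hmp := measurePreserving_piFinSuccAbove (fun i => gaussianReal (m i) v) 0
    set e := MeasurableEquiv.piFinSuccAbove (fun _ : Fin (n+1) => ℝ) 0
    have hpi : Measure.pi (fun i => gaussianReal (m i) v)
        = Measure.map e.symm (((gaussianReal (m 0) v)).prod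
            (Measure.pi fun j : Fin n => gaussianReal (m (Fin.succAbove 0 j)) v)) := by
      rw [← hmp.map_eq, Measure.map_map e.symm.measurable e.measurable]
      simp [Function.comp_def]
    rw [hpi, Measure.map_map (by fun_prop) e.symm.measurable]
    have hcomp : ((fun x : Fin (n+1) → ℝ => ∑ i, a i * x i) ∘ e.symm)
        = (fun p : ℝ × ℝ => p.1 + p.2) ∘
            (Prod.map (fun x : ℝ => a 0 * x)
              (fun y : Fin n → ℝ => ∑ j, a (Fin.succAbove 0 j) * y j)) := by
      funext p
      simp only [Function.comp_apply, Prod.map_apply, e,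
        MeasurableEquiv.piFinSuccAbove_symm_apply, Fin.insertNth_zero]
      rw [Fin.sum_univ_succ]
      simp [Fin.zero_succAbove]
    rw [hcomp, ← Measure.map_map (by fun_prop) (by fun_prop),
      ← Measure.map_prod_map _ _ (by fun_prop) (by fun_prop),
      gaussianReal_map_const_mul (a 0),
      ih (fun j => a (Fin.succAbove 0 j)) (fun j => m (Fin.succAbove 0 j))
        ⟨∑ j, (a (Fin.succAbove 0 j))^2, by positivity⟩ rfl,
      gaussianReal_conv]
    congr 1
    · rw [Fin.sum_univ_succ]
      simp [Fin.zero_succAbove]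
    · ext
      change a 0 ^ 2 * (v:ℝ) + (∑ j, a (Fin.succAbove 0 j) ^ 2) * (v:ℝ) = (V:ℝ) * v
      rw [← add_mul, hV, Fin.sum_univ_succ]
      simp [Fin.zero_succAbove]

lemma lintegral_fin_nat_prod : ∀ (n : ℕ) (μ : Fin n → Measure ℝ),
    (∀ i, SigmaFinite (μ i)) → ∀ (f : Fin n → ℝ → ℝ≥0∞), (∀ i, Measurable (f i)) →
    ∫⁻ x : Fin n → ℝ, ∏ i, f i (x i) ∂(Measure.pi μ) = ∏ i, ∫⁻ x, f i x ∂(μ i) := by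
  intro n
  induction n with
  | zero =>
    intro μ hμ f hf
    simp only [Finset.univ_eq_empty, Finset.prod_empty]
    rw [lintegral_one]
    have : (Measure.pi μ) Set.univ = 1 := by
      rw [Measure.pi_univ]; simp
    rw [this]
  | succ n ih =>
    intro μ hμ f hf
    have : ∀ i, SigmaFinite (μ i) := hμ
    have hmp := measurePreserving_piFinSuccAbove μ 0
    set e := MeasurableEquiv.piFinSuccAbove (fun _ : Fin (n+1) => ℝ) 0 with he
    set G : ℝ × (Fin n → ℝ) → ℝ≥0∞ :=
      fun p => f 0 p.1 * ∏ j, f (Fin.succAbove 0 j) (p.2 j) with hG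
    have hGm : Measurable G := by
      apply Measurable.mul
      · exact (hf 0).comp measurable_fst
      · exact Finset.measurable_prod _ fun j _ =>
          (hf _).comp ((measurable_pi_apply j).comp measurable_snd)
    have key : ∀ x : Fin (n+1) → ℝ, ∏ i, f i (x i) = G (e x) := by
      intro x
      rw [Fin.prod_univ_succ]
      simp [G, e, MeasurableEquiv.piFinSuccAbove, Fin.zero_succAbove, Fin.tail]
    have h2 : ∫⁻ p, G p ∂((μ 0).prod (Measure.pi fun j => μ (Fin.succAbove 0 j)))
        = ∏ i, ∫⁻ x, f i x ∂ μ i := by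
      refine Eq.trans (lintegral_prod_mul (f := fun x => f 0 x)
        (g := fun y : Fin n → ℝ => ∏ j, f (Fin.succAbove 0 j) (y j))
        ((hf 0).aemeasurable)
        ((Finset.measurable_prod _ fun j _ => (hf _).comp (measurable_pi_apply j)).aemeasurable)) ?_
      rw [ih _ (fun j => hμ _) _ (fun j => hf _), Fin.prod_univ_succ]
      simp [Fin.zero_succAbove]
    rw [lintegral_congr key]
    exact (hmp.lintegral_comp hGm).trans h2

lemma pi_gauss_withDensity (n : ℕ) (m : Fin n → ℝ) (v : ℝ≥0) (hv : v ≠ 0) :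
    Measure.pi (fun i => gaussianReal (m i) v)
      = (Measure.pi fun _ : Fin n => (volume : Measure ℝ)).withDensity
          (fun x => ∏ i, gaussianPDF (m i) v (x i)) := by
  refine Measure.pi_eq fun s hs => ?_
  rw [withDensity_apply _ (MeasurableSet.univ_pi hs), ← lintegral_indicator (MeasurableSet.univ_pi hs)]
  have : ∀ x : Fin n → ℝ, (Set.univ.pi s).indicator (fun x => ∏ i, gaussianPDF (m i) v (x i)) x
      = ∏ i, ((s i).indicator (gaussianPDF (m i) v)) (x i) := by
    intro x
    by_cases hx : x ∈ Set.univ.pi s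
    · rw [Set.indicator_of_mem hx]
      exact Finset.prod_congr rfl fun i _ =>
        (Set.indicator_of_mem (hx i (Set.mem_univ i)) _).symm
    · rw [Set.indicator_of_notMem hx]
      rw [Set.mem_pi] at hx
      push_neg at hx
      obtain ⟨i, _, hi⟩ := hx
      exact (Finset.prod_eq_zero (Finset.mem_univ i)
        (Set.indicator_of_notMem hi _)).symm
  simp_rw [this]
  rw [lintegral_fin_nat_prod n _ (fun i => inferInstance) _
    (fun i => (measurable_gaussianPDF _ _).indicator (hs i))]
  exact Finset.prod_congr rfl fun i _ => by
    rw [lintegral_indicator (hs i), ← gaussianReal_apply _ hv]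

lemma gpdf01 (x : ℝ) : gaussianPDFReal 0 1 x = (√(2*π))⁻¹ * rexp (-x^2/2) := by
  unfold gaussianPDFReal
  norm_num

lemma gauss_Ioi_zero : gaussianReal 0 1 (Set.Ioi (0:ℝ)) = 1/2 := by
  have hsymm : (gaussianReal (0:ℝ) 1).map (fun x => (-1) * x) = gaussianReal 0 1 := by
    rw [show (fun x : ℝ => (-1) * x) = ((-1 : ℝ) * ·) from rfl, gaussianReal_map_const_mul (-1)]
    congr 1
    · norm_num
    · ext; norm_num
  have h0 : gaussianReal (0:ℝ) 1 {0} = 0 :=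
    gaussianReal_absolutelyContinuous 0 one_ne_zero (measure_singleton 0)
  have hIio : gaussianReal (0:ℝ) 1 (Set.Iio 0) = gaussianReal 0 1 (Set.Ioi 0) := by
    conv_rhs => rw [← hsymm]
    rw [Measure.map_apply (by fun_prop) measurableSet_Ioi]
    congr 1
    ext x
    simp
  have hIci : gaussianReal (0:ℝ) 1 (Set.Ici 0) = gaussianReal 0 1 (Set.Ioi 0) := by
    rw [show Set.Ici (0:ℝ) = {0} ∪ Set.Ioi 0 by ext y; simp [le_iff_lt_or_eq, eq_comm],
      measure_union (by simp [Set.disjoint_left]) measurableSet_Ioi, h0, zero_add]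
  have huniv : gaussianReal (0:ℝ) 1 (Set.Iio 0) + gaussianReal 0 1 (Set.Ici 0) = 1 := by
    rw [← measure_union (by simp [Set.disjoint_left]) measurableSet_Ici,
      Set.Iio_union_Ici, measure_univ]
  rw [hIio, hIci, ← two_mul] at huniv
  rw [ENNReal.eq_div_iff (by norm_num) (by norm_num), huniv]

lemma gauss_strip (t : ℝ) : gaussianReal 0 1 (Set.Ioc t 0) ≤ ENNReal.ofReal ((√(2*π))⁻¹ * (-t)) := by
  rcases le_or_gt 0 t with h | h
  · rw [show Set.Ioc t (0:ℝ) = ∅ by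
      ext x; simp only [Set.mem_Ioc, Set.mem_empty_iff_false, iff_false, not_and, not_le]
      intro hx; linarith]
    simp
  rw [gaussianReal_apply_eq_integral _ one_ne_zero]
  apply ENNReal.ofReal_le_ofReal
  have : ∫ x in Set.Ioc t 0, gaussianPDFReal 0 1 x ≤ ∫ _x in Set.Ioc t 0, (√(2*π))⁻¹ := by
    apply setIntegral_mono_on ((integrable_gaussianPDFReal 0 1).integrableOn)
      (integrableOn_const measure_Ioc_lt_top.ne) measurableSet_Ioc
    intro x _
    rw [gpdf01]
    have h1 : rexp (-x^2/2) ≤ 1 := by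
      rw [Real.exp_le_one_iff]
      nlinarith [sq_nonneg x]
    have h2 : (0:ℝ) ≤ (√(2*π))⁻¹ := by positivity
    nlinarith
  refine this.trans ?_
  rw [setIntegral_const]
  rw [measureReal_def, Real.volume_Ioc, smul_eq_mul]
  rw [ENNReal.toReal_ofReal (by linarith)]
  nlinarith [Real.sqrt_nonneg (2*π), inv_nonneg.2 (Real.sqrt_nonneg (2*π))]

lemma integral_Ioi_x_exp (t : ℝ) :
    ∫ x in Set.Ioi t, x * rexp (-x^2/2) = rexp (-t^2/2) := by
  have hint : IntegrableOn (fun x => x * rexp (-x^2/2)) (Set.Ioi t) := by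
    have := integrable_mul_exp_neg_mul_sq (b := 1/2) (by norm_num)
    refine (this.congr ?_).integrableOn
    filter_upwards with x
    ring_nf
  have hderiv : ∀ x ∈ Set.Ici t, HasDerivAt (fun y => -rexp (-y^2/2)) (x * rexp (-x^2/2)) x := by
    intro x _
    have h1 : HasDerivAt (fun y : ℝ => -y^2/2) (-x) x := by
      have := ((hasDerivAt_pow 2 x).neg).div_const 2
      exact this.congr_deriv (by norm_num; ring)
    have h2 := (h1.exp).neg
    exact h2.congr_deriv (by ring)
  have htend : Tendsto (fun y : ℝ => -rexp (-y^2/2)) atTop (nhds 0) := by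
    rw [show (0:ℝ) = -0 by norm_num]
    apply Tendsto.neg
    apply Real.tendsto_exp_atBot.comp
    apply Tendsto.atBot_div_const (by norm_num : (0:ℝ) < 2)
    exact tendsto_neg_atTop_atBot.comp (tendsto_pow_atTop (by norm_num))
  have := integral_Ioi_of_hasDerivAt_of_tendsto' hderiv hint htend
  rw [this]
  ring

lemma gauss_tail_sharp (t : ℝ) (ht : 0 < t) :
    gaussianReal 0 1 (Set.Ioi t) ≤ ENNReal.ofReal ((√(2*π))⁻¹ * (rexp (-t^2/2) / t)) := by
  rw [gaussianReal_apply_eq_integral _ one_ne_zero]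
  apply ENNReal.ofReal_le_ofReal
  have hint : IntegrableOn (fun x => x * rexp (-x^2/2)) (Set.Ioi t) := by
    have := integrable_mul_exp_neg_mul_sq (b := 1/2) (by norm_num)
    refine (this.congr ?_).integrableOn
    filter_upwards with x
    ring_nf
  have step : ∫ x in Set.Ioi t, gaussianPDFReal 0 1 x
      ≤ ∫ x in Set.Ioi t, (√(2*π))⁻¹ * (t⁻¹ * (x * rexp (-x^2/2))) := by
    apply setIntegral_mono_on ((integrable_gaussianPDFReal 0 1).integrableOn)
      (((hint.const_mul t⁻¹).const_mul _))
      measurableSet_Ioi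
    intro x hx
    rw [gpdf01]
    have hx' : t ≤ x := le_of_lt hx
    have h2 : (0:ℝ) ≤ (√(2*π))⁻¹ := by positivity
    have h3 : (1:ℝ) ≤ t⁻¹ * x := by
      rw [← div_eq_inv_mul]
      exact (one_le_div ht).mpr hx'
    have h4 : (0:ℝ) < rexp (-x^2/2) := Real.exp_pos _
    calc (√(2*π))⁻¹ * rexp (-x^2/2) = (√(2*π))⁻¹ * (1 * rexp (-x^2/2)) := by ring
      _ ≤ (√(2*π))⁻¹ * ((t⁻¹ * x) * rexp (-x^2/2)) :=
          mul_le_mul_of_nonneg_left (mul_le_mul_of_nonneg_right h3 h4.le) h2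
      _ = (√(2*π))⁻¹ * (t⁻¹ * (x * rexp (-x^2/2))) := by ring
  refine step.trans ?_
  rw [integral_const_mul, integral_const_mul, integral_Ioi_x_exp]
  apply le_of_eq
  ring

lemma exp_fifth : rexp (1/5) < 1.25 := by
  have h : rexp (1/5) ^ (5:ℕ) = rexp 1 := by
    rw [← Real.exp_nat_mul]; norm_num
  have h2 : rexp 1 < 2.7182818286 := Real.exp_one_lt_d9
  have h3 : rexp (1/5) ^ (5:ℕ) < 1.25 ^ (5:ℕ) := by
    rw [h]; nlinarith
  exact lt_of_pow_lt_pow_left₀ 5 (by norm_num) h3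

lemma exp_ninetenth : rexp (9/10) < 2.5 := by
  have h : rexp (9/10) ^ (10:ℕ) = rexp 1 ^ (9:ℕ) := by
    rw [← Real.exp_nat_mul, ← Real.exp_nat_mul]; norm_num
  have h2 : rexp 1 < 2.7182818286 := Real.exp_one_lt_d9
  have h3 : rexp (9/10) ^ (10:ℕ) < 2.5 ^ (10:ℕ) := by
    rw [h]
    calc rexp 1 ^ (9:ℕ) < 2.7182818286 ^ (9:ℕ) := by
          apply pow_lt_pow_left₀ h2 (Real.exp_pos 1).le; norm_num
      _ < 2.5 ^ (10:ℕ) := by norm_num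
  exact lt_of_pow_lt_pow_left₀ 10 (by norm_num) h3

lemma exp_half_lt : rexp (1/2) < 1.65 := by
  have h : rexp (1/2) ^ (2:ℕ) = rexp 1 := by
    rw [← Real.exp_nat_mul]; norm_num
  have h2 : rexp 1 < 2.7182818286 := Real.exp_one_lt_d9
  have h3 : rexp (1/2) ^ (2:ℕ) < 1.65 ^ (2:ℕ) := by rw [h]; nlinarith
  exact lt_of_pow_lt_pow_left₀ 2 (by norm_num) h3

lemma sqrt_two_pi_gt : (2.5:ℝ) < √(2*π) := by
  rw [show (2.5:ℝ) = √(2.5^2) by rw [Real.sqrt_sq]; norm_num]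
  apply Real.sqrt_lt_sqrt (by norm_num)
  nlinarith [Real.pi_gt_d6]

lemma inv_sqrt_two_pi_lt : (√(2*π))⁻¹ < 0.4 := by
  have h := sqrt_two_pi_gt
  have h2 : (0:ℝ) < 2.5 := by norm_num
  calc (√(2*π))⁻¹ < (2.5:ℝ)⁻¹ := by
        apply inv_strictAnti₀ h2 h
    _ = 0.4 := by norm_num

lemma master_tail (ε δ t : ℝ) (hε : 0 < ε) (hε1 : ε ≤ 1) (hδ : 0 < δ) (hδ1 : δ < 1)
    (ht : √(2 * Real.log (1.25/δ)) - ε / (2 * √(2 * Real.log (1.25/δ))) ≤ t) :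
    gaussianReal 0 1 (Set.Ioi t) ≤ ENNReal.ofReal δ := by
  set L := Real.log (1.25/δ) with hL
  have hratio : (1:ℝ) < 1.25/δ := by
    rw [lt_div_iff₀ hδ]; linarith
  have hL5 : 1/5 < L := by
    have h1 : Real.log 1.25 > 1/5 := by
      rw [gt_iff_lt, Real.lt_log_iff_exp_lt (by norm_num)]
      exact exp_fifth
    have h2 : Real.log 1.25 ≤ L := Real.log_le_log (by norm_num) (by
      rw [le_div_iff₀ hδ]; nlinarith)
    linarith
  have hLpos : 0 < L := by linarith
  set r := √(2*L) with hr
  have hrpos : 0 < r := Real.sqrt_pos.mpr (by linarith)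
  have hr2 : r^2 = 2*L := Real.sq_sqrt (by linarith)
  have hrlow : (0.63:ℝ) < r := by
    rw [hr, show (0.63:ℝ) = √(0.63^2) by rw [Real.sqrt_sq]; norm_num]
    apply Real.sqrt_lt_sqrt (by norm_num)
    nlinarith
  have hexpL : rexp (-L) = δ/1.25 := by
    rw [hL, Real.exp_neg, Real.exp_log (by positivity), inv_div]
  have htlow : r - 1/(2*r) ≤ t := by
    have : r - ε/(2*r) ≤ t := ht
    have h1 : ε/(2*r) ≤ 1/(2*r) :=
      (div_le_div_iff_of_pos_right (by linarith)).mpr hε1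
    linarith
  rcases lt_or_ge δ (1/2 : ℝ) with hhalf | hhalf
  · -- sharp case
    have hL9 : 9/10 < L := by
      have h1 : Real.log 2.5 > 9/10 := by
        rw [gt_iff_lt, Real.lt_log_iff_exp_lt (by norm_num)]
        exact exp_ninetenth
      have h2 : Real.log 2.5 ≤ L := Real.log_le_log (by norm_num) (by
        rw [le_div_iff₀ hδ]; nlinarith)
      linarith
    have hrlow2 : (1.34:ℝ) < r := by
      rw [hr, show (1.34:ℝ) = √(1.34^2) by rw [Real.sqrt_sq]; norm_num]
      apply Real.sqrt_lt_sqrt (by norm_num)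
      nlinarith
    have htpos : (0.96:ℝ) < t := by
      have : r - 1/(2*r) > 0.96 := by
        rw [gt_iff_lt, show r - 1/(2*r) = (2*r^2 - 1)/(2*r) by field_simp,
          lt_div_iff₀ (by linarith)]
        nlinarith
      linarith
    refine (gauss_tail_sharp t (by linarith)).trans (ENNReal.ofReal_le_ofReal ?_)
    have hts : r - ε/(2*r) ≥ 0 := by
      rw [ge_iff_le, sub_nonneg, div_le_iff₀ (by linarith)]
      nlinarith
    have ht2 : 2*L - ε ≤ t^2 := by
      have h1 : (r - ε/(2*r))^2 ≤ t^2 := by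
        apply pow_le_pow_left₀ hts ht
      have h2 : (r - ε/(2*r))^2 = r^2 - ε + (ε/(2*r))^2 := by
        field_simp
        ring
      nlinarith [sq_nonneg (ε/(2*r))]
    have hexp : rexp (-t^2/2) ≤ 1.65 * (δ/1.25) := by
      calc rexp (-t^2/2) ≤ rexp (1/2 - L) := by
            apply Real.exp_le_exp.mpr; linarith
        _ = rexp (1/2) * rexp (-L) := by rw [← Real.exp_add]; ring_nf
        _ ≤ 1.65 * (δ/1.25) := by
            rw [hexpL]
            apply mul_le_mul_of_nonneg_right exp_half_lt.le (by positivity)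
    have hE : (0:ℝ) < rexp (-t^2/2) := Real.exp_pos _
    calc (√(2*π))⁻¹ * (rexp (-t^2/2) / t) ≤ 0.4 * ((1.65 * (δ/1.25)) / 0.96) := by
          apply mul_le_mul inv_sqrt_two_pi_lt.le
          · apply div_le_div₀ (by positivity) hexp (by norm_num) htpos.le
          · positivity
          · norm_num
      _ = 0.55 * δ := by ring
      _ ≤ δ := by linarith
  · -- easy case
    rcases le_or_gt 0 t with htpos | htneg
    · calc gaussianReal 0 1 (Set.Ioi t) ≤ gaussianReal 0 1 (Set.Ioi 0) :=
            measure_mono (Set.Ioi_subset_Ioi htpos)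
        _ = 1/2 := gauss_Ioi_zero
        _ ≤ ENNReal.ofReal δ := by
            rw [show (1/2 : ℝ≥0∞) = ENNReal.ofReal (1/2) by
              rw [ENNReal.ofReal_div_of_pos (by norm_num)]; norm_num]
            exact ENNReal.ofReal_le_ofReal hhalf
    · -- t < 0
      have hδbig : (0.9375:ℝ) < δ := by
        have h1 : r - ε/(2*r) < 0 := lt_of_le_of_lt ht htneg
        have h2 : r^2 < ε/2 := by
          rw [sub_neg, lt_div_iff₀ (by linarith : (0:ℝ) < 2*r)] at h1
          nlinarith
        have h3 : L < 1/4 := by nlinarith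
        have h4 : 1.25/δ < rexp (1/4) := by
          rw [← Real.exp_log (x := 1.25/δ) (by positivity)]
          exact Real.exp_lt_exp.mpr (by rw [← hL]; linarith)
        have h5 : rexp (1/4) ≤ 4/3 := by
          have := Real.add_one_le_exp (-(1/4) : ℝ)
          have hpos : (0:ℝ) < rexp (-(1/4)) := Real.exp_pos _
          have h6 : rexp (1/4) = (rexp (-(1/4)))⁻¹ := by
            rw [← Real.exp_neg]; norm_num
          rw [h6]
          rw [inv_le_comm₀ (by positivity) (by norm_num)]
          linarith
        have : 1.25/δ < 4/3 := lt_of_lt_of_le h4 h5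
        rw [div_lt_iff₀ hδ] at this
        linarith
      have htlow2 : -(0.164:ℝ) < t := by
        have : r - 1/(2*r) > -0.164 := by
          rw [gt_iff_lt, show r - 1/(2*r) = (2*r^2 - 1)/(2*r) by field_simp,
            lt_div_iff₀ (by linarith : (0:ℝ) < 2*r)]
          nlinarith
        linarith
      have hsplit : Set.Ioi t ⊆ Set.Ioc t 0 ∪ Set.Ioi 0 := by
        intro x hx
        rcases le_or_gt x 0 with h | h
        · exact Or.inl ⟨hx, h⟩
        · exact Or.inr h
      calc gaussianReal 0 1 (Set.Ioi t)
          ≤ gaussianReal 0 1 (Set.Ioc t 0 ∪ Set.Ioi 0) := measure_mono hsplit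
        _ ≤ gaussianReal 0 1 (Set.Ioc t 0) + gaussianReal 0 1 (Set.Ioi 0) := measure_union_le _ _
        _ ≤ ENNReal.ofReal ((√(2*π))⁻¹ * (-t)) + 1/2 := by
            apply add_le_add (gauss_strip t) (le_of_eq gauss_Ioi_zero)
        _ ≤ ENNReal.ofReal (0.4 * 0.164) + ENNReal.ofReal (1/2) := by
            apply add_le_add
            · apply ENNReal.ofReal_le_ofReal
              apply mul_le_mul inv_sqrt_two_pi_lt.le (by linarith) (by linarith) (by norm_num)
            · apply le_of_eq
              rw [ENNReal.ofReal_div_of_pos (by norm_num)]; norm_num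
        _ ≤ ENNReal.ofReal δ := by
            rw [← ENNReal.ofReal_add (by norm_num) (by norm_num)]
            apply ENNReal.ofReal_le_ofReal
            linarith

lemma gaussianReal_Ioi_eq (M : ℝ) (V : ℝ≥0) (hV : 0 < (V:ℝ)) (θ : ℝ) :
    gaussianReal M V (Set.Ioi θ) = gaussianReal 0 1 (Set.Ioi ((θ - M)/√(V:ℝ))) := by
  have hsp : 0 < √(V:ℝ) := Real.sqrt_pos.mpr hV
  have hmap : gaussianReal M V = (gaussianReal (0:ℝ) 1).map (fun z => √(V:ℝ) * z + M) := by
    have h1 : (gaussianReal (0:ℝ) 1).map ((√(V:ℝ)) * ·) = gaussianReal 0 V := by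
      rw [gaussianReal_map_const_mul]
      congr 1
      · ring
      · rw [mul_one]
        ext
        exact Real.sq_sqrt hV.le
    have h2 := gaussianReal_map_add_const (μ := (0:ℝ)) (v := V) M
    rw [← h1, Measure.map_map (by fun_prop) (by fun_prop), zero_add] at h2
    rw [← h2]
    rfl
  rw [hmap, Measure.map_apply (by fun_prop) measurableSet_Ioi]
  congr 1
  ext z
  simp only [Set.mem_preimage, Set.mem_Ioi]
  rw [div_lt_iff₀ hsp]
  constructor <;> intro h <;> nlinarith

lemma oneSided {d : ℕ} (m₁ m₂ : Fin d → ℝ) (Δ ε δ σ : ℝ)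
    (hΔ : 0 < Δ) (hdist : √(∑ i, (m₁ i - m₂ i)^2) ≤ Δ)
    (hε : 0 < ε) (hε1 : ε ≤ 1) (hδ : 0 < δ) (hδ1 : δ < 1) (hσpos : 0 < σ)
    (hσ : (Δ / ε) * √(2 * Real.log (1.25 / δ)) ≤ σ) :
    ∀ S : Set (Fin d → ℝ), MeasurableSet S →
      Measure.pi (fun i => gaussianReal (m₁ i) ⟨σ^2, sq_nonneg σ⟩) S ≤
        ENNReal.ofReal (rexp ε) *
          Measure.pi (fun i => gaussianReal (m₂ i) ⟨σ^2, sq_nonneg σ⟩) S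
          + ENNReal.ofReal δ := by
  intro S hS
  set v : ℝ≥0 := ⟨σ^2, sq_nonneg σ⟩ with hvdef
  have hvR : (v:ℝ) = σ^2 := rfl
  have hv : v ≠ 0 := by
    intro h
    have : (v:ℝ) = 0 := by rw [h]; rfl
    rw [hvR] at this
    nlinarith
  have hone : (1:ℝ≥0∞) ≤ ENNReal.ofReal (rexp ε) := by
    rw [← ENNReal.ofReal_one]
    exact ENNReal.ofReal_le_ofReal (Real.one_le_exp hε.le)
  by_cases hρ0 : ∑ i, (m₁ i - m₂ i)^2 = 0
  · have hm : m₁ = m₂ := by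
      funext i
      have h1 := (Finset.sum_eq_zero_iff_of_nonneg
        (fun i _ => sq_nonneg (m₁ i - m₂ i))).mp hρ0 i (Finset.mem_univ i)
      have h2 : m₁ i - m₂ i = 0 := by
        exact pow_eq_zero_iff (by norm_num) |>.mp h1
      linarith
    rw [hm]
    calc Measure.pi (fun i => gaussianReal (m₂ i) v) S
        = 1 * Measure.pi (fun i => gaussianReal (m₂ i) v) S := (one_mul _).symm
      _ ≤ ENNReal.ofReal (rexp ε) * Measure.pi (fun i => gaussianReal (m₂ i) v) S :=
          mul_le_mul_left hone _
      _ ≤ _ := le_self_add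
  -- main case
  have hρpos : 0 < ∑ i, (m₁ i - m₂ i)^2 :=
    lt_of_le_of_ne (Finset.sum_nonneg fun i _ => sq_nonneg _) (Ne.symm hρ0)
  set ρ := √(∑ i, (m₁ i - m₂ i)^2) with hρdef
  have hρp : 0 < ρ := Real.sqrt_pos.mpr hρpos
  have hρ2 : ρ^2 = ∑ i, (m₁ i - m₂ i)^2 := Real.sq_sqrt hρpos.le
  set θ : ℝ := σ^2*ε - ρ^2/2 + ∑ i, (m₁ i - m₂ i) * m₁ i with hθdef
  set B : Set (Fin d → ℝ) := (fun x => ∑ i, (m₁ i - m₂ i) * x i) ⁻¹' (Set.Ioi θ) with hBdef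
  have hLm : Measurable (fun x : Fin d → ℝ => ∑ i, (m₁ i - m₂ i) * x i) :=
    Finset.measurable_sum _ fun i _ => (measurable_pi_apply i).const_mul _
  have hBm : MeasurableSet B := hLm measurableSet_Ioi
  -- measure of B
  set V : ℝ≥0 := ⟨∑ i, (m₁ i - m₂ i)^2, hρpos.le⟩ with hVdef
  have hmapB := map_sum_pi_gauss v d (fun i => m₁ i - m₂ i) m₁ V rfl
  have hVv : ((V*v : ℝ≥0):ℝ) = ρ^2 * σ^2 := by
    push_cast
    rw [hρ2]
    rfl
  have hνB : Measure.pi (fun i => gaussianReal (m₁ i) v) B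
      = gaussianReal 0 1 (Set.Ioi ((θ - ∑ i, (m₁ i - m₂ i) * m₁ i) / (ρ*σ))) := by
    rw [hBdef, ← Measure.map_apply hLm measurableSet_Ioi, hmapB,
      gaussianReal_Ioi_eq _ _ (by rw [hVv]; positivity) θ]
    congr 2
    rw [hVv, show ρ^2*σ^2 = (ρ*σ)^2 by ring, Real.sqrt_sq (by positivity)]
  -- tail bound
  set r := √(2 * Real.log (1.25 / δ)) with hrdef
  have hrpos : 0 < r := by
    apply Real.sqrt_pos.mpr
    have : (1:ℝ) < 1.25/δ := by rw [lt_div_iff₀ hδ]; linarith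
    have := Real.log_pos this
    linarith
  have key : ρ * r ≤ σ * ε := by
    have h1 : Δ * r ≤ σ * ε := by
      rw [div_mul_eq_mul_div, div_le_iff₀ hε] at hσ
      linarith [hσ]
    have h2 : ρ * r ≤ Δ * r := mul_le_mul_of_nonneg_right hdist hrpos.le
    linarith
  have hB_small : Measure.pi (fun i => gaussianReal (m₁ i) v) B ≤ ENNReal.ofReal δ := by
    rw [hνB]
    apply master_tail ε δ _ hε hε1 hδ hδ1
    rw [← hrdef]
    have hsimp : (θ - ∑ i, (m₁ i - m₂ i) * m₁ i) / (ρ*σ) = (σ^2*ε - ρ^2/2)/(ρ*σ) := by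
      rw [hθdef, add_sub_cancel_right]
    rw [hsimp, le_div_iff₀ (by positivity)]
    have h3 : ρ^2/2 ≤ ε*ρ*σ/(2*r) := by
      rw [div_le_div_iff₀ (by norm_num) (by positivity)]
      nlinarith [mul_le_mul_of_nonneg_left key hρp.le]
    have h4 : r * (ρ*σ) ≤ σ^2 * ε := by nlinarith [mul_le_mul_of_nonneg_left key hσpos.le]
    have expand : (r - ε/(2*r)) * (ρ*σ) = r*(ρ*σ) - ε*ρ*σ/(2*r) := by
      field_simp
    linarith
  -- pointwise density bound
  have hpoint : ∀ x, x ∉ B → (∏ i, gaussianPDF (m₁ i) v (x i))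
      ≤ ENNReal.ofReal (rexp ε) * ∏ i, gaussianPDF (m₂ i) v (x i) := by
    intro x hx
    have hxB : ∑ i, (m₁ i - m₂ i) * x i ≤ θ := by
      rw [hBdef] at hx
      simpa using hx
    have hterm : ∀ i, gaussianPDFReal (m₁ i) v (x i)
        = gaussianPDFReal (m₂ i) v (x i)
          * rexp (((x i - m₂ i)^2 - (x i - m₁ i)^2)/(2*σ^2)) := by
      intro i
      unfold gaussianPDFReal
      rw [mul_assoc ((√(2 * π * (v:ℝ)))⁻¹), ← Real.exp_add]
      congr 1
      rw [hvR]
      field_simp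
      ring
    have hsum : ∑ i, ((x i - m₂ i)^2 - (x i - m₁ i)^2)/(2*σ^2) ≤ ε := by
      have heach : ∀ i, ((x i - m₂ i)^2 - (x i - m₁ i)^2)
          = 2*(m₁ i - m₂ i)*(x i) - (m₁ i - m₂ i)*(m₁ i) - (m₁ i - m₂ i)*(m₂ i) := by
        intro i; ring
      have hsum2 : ∑ i, ((x i - m₂ i)^2 - (x i - m₁ i)^2)/(2*σ^2)
          = ((∑ i, 2*(m₁ i - m₂ i)*(x i)) - (∑ i, (m₁ i - m₂ i)*(m₁ i))
              - (∑ i, (m₁ i - m₂ i)*(m₂ i)))/(2*σ^2) := by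
        rw [← Finset.sum_div]
        congr 1
        rw [← Finset.sum_sub_distrib, ← Finset.sum_sub_distrib]
        exact Finset.sum_congr rfl fun i _ => by rw [heach]
      rw [hsum2]
      have hdiff : (∑ i, (m₁ i - m₂ i)*(m₁ i)) - (∑ i, (m₁ i - m₂ i)*(m₂ i)) = ρ^2 := by
        rw [hρ2, ← Finset.sum_sub_distrib]
        exact Finset.sum_congr rfl fun i _ => by ring
      have hsum3 : ∑ i, 2*(m₁ i - m₂ i)*(x i) = 2 * ∑ i, (m₁ i - m₂ i)*(x i) := by
        rw [Finset.mul_sum]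
        exact Finset.sum_congr rfl fun i _ => by ring
      rw [div_le_iff₀ (by positivity)]
      rw [hsum3]
      have hxB' : ∑ i, (m₁ i - m₂ i) * x i
          ≤ σ^2*ε - ρ^2/2 + ∑ i, (m₁ i - m₂ i) * m₁ i := le_trans hxB (le_of_eq hθdef)
      linarith [hxB', hdiff]
    calc (∏ i, gaussianPDF (m₁ i) v (x i))
        = ENNReal.ofReal (∏ i, gaussianPDFReal (m₁ i) v (x i)) := by
          rw [ENNReal.ofReal_prod_of_nonneg fun i _ => gaussianPDFReal_nonneg _ _ _]
          rfl
      _ ≤ ENNReal.ofReal (rexp ε * ∏ i, gaussianPDFReal (m₂ i) v (x i)) := by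
          apply ENNReal.ofReal_le_ofReal
          calc ∏ i, gaussianPDFReal (m₁ i) v (x i)
              = (∏ i, gaussianPDFReal (m₂ i) v (x i)) *
                  rexp (∑ i, ((x i - m₂ i)^2 - (x i - m₁ i)^2)/(2*σ^2)) := by
                rw [Real.exp_sum, ← Finset.prod_mul_distrib]
                exact Finset.prod_congr rfl fun i _ => hterm i
            _ ≤ (∏ i, gaussianPDFReal (m₂ i) v (x i)) * rexp ε := by
                apply mul_le_mul_of_nonneg_left (Real.exp_le_exp.mpr hsum)
                exact Finset.prod_nonneg fun i _ => gaussianPDFReal_nonneg _ _ _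
            _ = rexp ε * ∏ i, gaussianPDFReal (m₂ i) v (x i) := by ring
      _ = ENNReal.ofReal (rexp ε) * ∏ i, gaussianPDF (m₂ i) v (x i) := by
          rw [ENNReal.ofReal_mul (Real.exp_pos ε).le,
            ENNReal.ofReal_prod_of_nonneg fun i _ => gaussianPDFReal_nonneg _ _ _]
          rfl
  -- splitting
  have hF₂m : Measurable (fun x : Fin d → ℝ => ∏ i, gaussianPDF (m₂ i) v (x i)) :=
    Finset.measurable_prod _ fun i _ => (measurable_gaussianPDF _ _).comp (measurable_pi_apply i)
  have hsplit : Measure.pi (fun i => gaussianReal (m₁ i) v) S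
      ≤ Measure.pi (fun i => gaussianReal (m₁ i) v) B
        + ENNReal.ofReal (rexp ε) * Measure.pi (fun i => gaussianReal (m₂ i) v) S := by
    calc Measure.pi (fun i => gaussianReal (m₁ i) v) S
        = Measure.pi (fun i => gaussianReal (m₁ i) v) ((S ∩ B) ∪ (S ∩ Bᶜ)) := by
          rw [Set.inter_union_compl]
      _ ≤ Measure.pi (fun i => gaussianReal (m₁ i) v) (S ∩ B)
          + Measure.pi (fun i => gaussianReal (m₁ i) v) (S ∩ Bᶜ) := measure_union_le _ _
      _ ≤ Measure.pi (fun i => gaussianReal (m₁ i) v) B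
          + Measure.pi (fun i => gaussianReal (m₁ i) v) (S ∩ Bᶜ) :=
          add_le_add_left (measure_mono Set.inter_subset_right) _
      _ ≤ Measure.pi (fun i => gaussianReal (m₁ i) v) B
          + ENNReal.ofReal (rexp ε) * Measure.pi (fun i => gaussianReal (m₂ i) v) S := by
          apply add_le_add_right
          rw [pi_gauss_withDensity d m₁ v hv, pi_gauss_withDensity d m₂ v hv,
            withDensity_apply _ (hS.inter hBm.compl), withDensity_apply _ hS]
          calc ∫⁻ x in S ∩ Bᶜ, ∏ i, gaussianPDF (m₁ i) v (x i)
              ≤ ∫⁻ x in S ∩ Bᶜ, ENNReal.ofReal (rexp ε) * ∏ i, gaussianPDF (m₂ i) v (x i) := by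
                apply setLIntegral_mono (hF₂m.const_mul _)
                intro x hx
                exact hpoint x hx.2
            _ = ENNReal.ofReal (rexp ε) * ∫⁻ x in S ∩ Bᶜ, ∏ i, gaussianPDF (m₂ i) v (x i) := by
                rw [lintegral_const_mul _ hF₂m]
            _ ≤ ENNReal.ofReal (rexp ε) * ∫⁻ x in S, ∏ i, gaussianPDF (m₂ i) v (x i) := by
                apply mul_le_mul_right
                exact lintegral_mono_set Set.inter_subset_left
  calc Measure.pi (fun i => gaussianReal (m₁ i) v) S
      ≤ Measure.pi (fun i => gaussianReal (m₁ i) v) B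
        + ENNReal.ofReal (rexp ε) * Measure.pi (fun i => gaussianReal (m₂ i) v) S := hsplit
    _ ≤ ENNReal.ofReal δ
        + ENNReal.ofReal (rexp ε) * Measure.pi (fun i => gaussianReal (m₂ i) v) S :=
        add_le_add_left hB_small _
    _ = ENNReal.ofReal (rexp ε) * Measure.pi (fun i => gaussianReal (m₂ i) v) S
        + ENNReal.ofReal δ := add_comm _ _

end AuxiliaryLemmas


open MeasureTheory ProbabilityTheory

/-- The Gaussian measure on `EuclideanSpace ℝ (Fin d)` with mean `m` and covariance
`σ²·I`: the pushforward, under the canonical measurable equivalence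
`(Fin d → ℝ) ≃ᵐ EuclideanSpace ℝ (Fin d)`, of the product of the coordinate Gaussians
`gaussianReal (m i) σ²`. -/
noncomputable def gaussianEuclidean {d : ℕ} (m : EuclideanSpace ℝ (Fin d)) (v : NNReal) :
    Measure (EuclideanSpace ℝ (Fin d)) :=
  Measure.map (MeasurableEquiv.toLp 2 (Fin d → ℝ))
    (Measure.pi fun i => gaussianReal (m i) v)

/-- (Theorem 2 / Gaussian mechanism) If `‖w̃ − w̃*‖ ≤ Δ`, `0 < ε < 1`, `0 < δ < 1`, and
`σ ≥ (Δ/ε)·√(2 ln(1.25/δ))`, then the spherical Gaussians with variance `σ²` centered at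
`w̃` and at `w̃*` are `(ε, δ)`-indistinguishable: for every measurable set `T`,
`μ_{w̃}(T) ≤ e^ε μ_{w̃*}(T) + δ` and `μ_{w̃*}(T) ≤ e^ε μ_{w̃}(T) + δ`. -/
theorem gaussian_mechanism_certified_unlearning
    {d : ℕ} (hd : 1 ≤ d)
    (wt wtstar : EuclideanSpace ℝ (Fin d))
    (Δ ε δ σ : ℝ)
    (hΔ : 0 < Δ) (hdist : ‖wt - wtstar‖ ≤ Δ)
    (hε : 0 < ε) (hε1 : ε < 1) (hδ : 0 < δ) (hδ1 : δ < 1)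
    (hσpos : 0 < σ)
    (hσ : (Δ / ε) * Real.sqrt (2 * Real.log (1.25 / δ)) ≤ σ) :
    ∀ T : Set (EuclideanSpace ℝ (Fin d)), MeasurableSet T →
      gaussianEuclidean wt ⟨σ ^ 2, sq_nonneg σ⟩ T ≤
          ENNReal.ofReal (Real.exp ε) * gaussianEuclidean wtstar ⟨σ ^ 2, sq_nonneg σ⟩ T
            + ENNReal.ofReal δ ∧
        gaussianEuclidean wtstar ⟨σ ^ 2, sq_nonneg σ⟩ T ≤
          ENNReal.ofReal (Real.exp ε) * gaussianEuclidean wt ⟨σ ^ 2, sq_nonneg σ⟩ T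
            + ENNReal.ofReal δ := by
  intro T hT
  have hmeas : MeasurableSet ((MeasurableEquiv.toLp 2 (Fin d → ℝ)) ⁻¹' T) :=
    (MeasurableEquiv.toLp 2 (Fin d → ℝ)).measurable hT
  have happly : ∀ (m : EuclideanSpace ℝ (Fin d)),
      gaussianEuclidean m ⟨σ ^ 2, sq_nonneg σ⟩ T
        = Measure.pi (fun i => gaussianReal (m i) ⟨σ ^ 2, sq_nonneg σ⟩)
            ((MeasurableEquiv.toLp 2 (Fin d → ℝ)) ⁻¹' T) := fun m =>
    Measure.map_apply (MeasurableEquiv.toLp 2 (Fin d → ℝ)).measurable hT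
  have hnorm : ‖wt - wtstar‖ = Real.sqrt (∑ i, (wt i - wtstar i)^2) := by
    rw [EuclideanSpace.norm_eq]
    congr 1
    refine Finset.sum_congr rfl fun i _ => ?_
    rw [show (wt - wtstar) i = wt i - wtstar i from rfl, Real.norm_eq_abs, sq_abs]
  have hd1 : Real.sqrt (∑ i, (wt i - wtstar i)^2) ≤ Δ := by rw [← hnorm]; exact hdist
  have hd2 : Real.sqrt (∑ i, (wtstar i - wt i)^2) ≤ Δ := by
    rw [show ∑ i, (wtstar i - wt i)^2 = ∑ i, (wt i - wtstar i)^2 from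
      Finset.sum_congr rfl fun i _ => by ring]
    exact hd1
  constructor
  · rw [happly wt, happly wtstar]
    exact oneSided (fun i => wt i) (fun i => wtstar i) Δ ε δ σ hΔ hd1 hε hε1.le hδ hδ1
      hσpos hσ _ hmeas
  · rw [happly wt, happly wtstar]
    exact oneSided (fun i => wtstar i) (fun i => wt i) Δ ε δ σ hΔ hd2 hε hε1.le hδ hδ1
      hσpos hσ _ hmeas
end
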